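/- arXiv:2202.13679 — 3 statements merged into one kernel-verified Lean document; each statement's English description precedes it below -/
import Mathlib

section
/- Let G be a metabelian 5-group of maximal class of order 5^n with n ≥ 4 and G/γ_2(G) of type (5,5), with defect k = k(G). Let x ∈ G ∖ χ_2(G) and y ∈ χ_2(G) ∖ γ_2(G), and let the six maximal normal subgroups of G be H_1 = ⟨y, γ_2(G)⟩ = χ_2(G) and H_i = ⟨x y^{i−2}, γ_2(G)⟩ for 2 ≤ i ≤ 6. Then |H_i / γ_2(H_i)| = 5^2 for 2 ≤ i ≤ 6, and |H_1 / γ_2(H_1)| = 5^{n−k−1}. -/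
open Subgroup
open scoped commutatorElement

/-- The two-step centralizer `χ₂(G) = {g ∈ G : [g,u] ∈ γ₄(G) for all u ∈ γ₂(G)}`,
where `γ_j(G) = lowerCentralSeries G (j-1)`. -/
def twoStepCentralizer (G : Type*) [Group G] : Subgroup G where
  carrier := {g : G | ∀ u ∈ (⊤ : Subgroup G).lowerCentralSeries 1, ⁅g, u⁆ ∈ (⊤ : Subgroup G).lowerCentralSeries 3}
  one_mem' := by
    intro u hu
    simpa using one_mem ((⊤ : Subgroup G).lowerCentralSeries 3)
  mul_mem' := by
    intro a b ha hb u hu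
    have h : ⁅a * b, u⁆ = (a * ⁅b, u⁆ * a⁻¹) * ⁅a, u⁆ := by
      simp only [commutatorElement_def]; group
    rw [h]
    exact mul_mem ((Subgroup.lowerCentralSeries_normal (⊤ : Subgroup G) 3).conj_mem _ (hb u hu) a) (ha u hu)
  inv_mem' := by
    intro a ha u hu
    have h : ⁅a⁻¹, u⁆ = a⁻¹ * ⁅a, u⁆⁻¹ * a := by
      simp only [commutatorElement_def]; group
    rw [h]
    simpa using (Subgroup.lowerCentralSeries_normal (⊤ : Subgroup G) 3).conj_mem _ (inv_mem (ha u hu)) a⁻¹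

section MyHelpers

variable {G : Type*} [Group G]

lemma my_lcs_succ (i : ℕ) :
    (⊤ : Subgroup G).lowerCentralSeries (i + 1) = ⁅(⊤ : Subgroup G).lowerCentralSeries i, ⊤⁆ := rfl

/-- If `⁅A,B⁆ ≤ M` and `⁅A,C⁆ ≤ M` with `M` normal, then `⁅A, B ⊔ C⁆ ≤ M`. -/
lemma my_commutator_sup_right {A B C M : Subgroup G} [M.Normal]
    (h1 : ⁅A, B⁆ ≤ M) (h2 : ⁅A, C⁆ ≤ M) : ⁅A, B ⊔ C⁆ ≤ M := by
  rw [Subgroup.commutator_le]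
  intro a ha g hg
  have key : ∀ D : Subgroup G, ⁅A, D⁆ ≤ M →
      D ≤ Subgroup.comap (QuotientGroup.mk' M)
        (Subgroup.centralizer {(QuotientGroup.mk' M) a}) := by
    intro D hD d hd
    have hm : ⁅a, d⁆ ∈ M := hD (Subgroup.commutator_mem_commutator ha hd)
    have h1' : (QuotientGroup.mk' M) ⁅a, d⁆ = 1 := by
      rwa [← QuotientGroup.ker_mk' M, MonoidHom.mem_ker] at hm
    rw [map_commutatorElement] at h1'
    rw [Subgroup.mem_comap, Subgroup.mem_centralizer_iff]
    rintro h rfl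
    exact (commutatorElement_eq_one_iff_commute.mp h1').eq
  have hmem := (sup_le (key B h1) (key C h2)) hg
  rw [Subgroup.mem_comap, Subgroup.mem_centralizer_iff] at hmem
  have hc : Commute ((QuotientGroup.mk' M) a) ((QuotientGroup.mk' M) g) := hmem _ rfl
  have h1' : (QuotientGroup.mk' M) ⁅a, g⁆ = 1 := by
    rw [map_commutatorElement]
    exact commutatorElement_eq_one_iff_commute.mpr hc
  rwa [← MonoidHom.mem_ker, QuotientGroup.ker_mk' M] at h1'

lemma my_commutator_sup_left {A B C M : Subgroup G} [M.Normal]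
    (h1 : ⁅A, C⁆ ≤ M) (h2 : ⁅B, C⁆ ≤ M) : ⁅A ⊔ B, C⁆ ≤ M := by
  rw [Subgroup.commutator_comm]
  exact my_commutator_sup_right (Subgroup.commutator_comm C A ▸ h1)
    (Subgroup.commutator_comm C B ▸ h2)

/-- A subgroup containing the commutator subgroup is normal. -/
lemma my_normal_of_commutator_le {H : Subgroup G}
    (h : (⊤ : Subgroup G).lowerCentralSeries 1 ≤ H) : H.Normal := by
  constructor
  intro a ha g
  have hc : ⁅g, a⁆ ∈ H := h (by
    rw [top_lowerCentralSeries_one, commutator_def]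
    exact Subgroup.commutator_mem_commutator (mem_top g) (mem_top a))
  have heq : g * a * g⁻¹ = ⁅g, a⁆ * a := by group
  rw [heq]
  exact mul_mem hc ha

/-- For `H = ⟨s⟩ ⊔ A` with `A` normal and `H` normal, `⁅H,H⁆ = ⁅H,A⁆`. -/
lemma my_commutator_self (A : Subgroup G) [A.Normal] (s : G)
    [h : (Subgroup.closure {s} ⊔ A).Normal] :
    ⁅Subgroup.closure {s} ⊔ A, Subgroup.closure {s} ⊔ A⁆ =
      ⁅Subgroup.closure {s} ⊔ A, A⁆ := by
  set H := Subgroup.closure {s} ⊔ A with hH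
  haveI : (⁅H, A⁆).Normal := Subgroup.commutator_normal H A
  refine le_antisymm ?_ (Subgroup.commutator_mono le_rfl le_sup_right)
  have hss : ⁅Subgroup.closure {s}, Subgroup.closure {s}⁆ ≤ ⁅H, A⁆ := by
    rw [Subgroup.commutator_le]
    intro a ha b hb
    rw [Subgroup.mem_closure_singleton] at ha hb
    obtain ⟨p, rfl⟩ := ha; obtain ⟨q, rfl⟩ := hb
    have hone : ⁅s ^ p, s ^ q⁆ = 1 :=
      commutatorElement_eq_one_iff_commute.mpr ((Commute.refl s).zpow_zpow p q)
    rw [hone]; exact one_mem _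
  have hsA : ⁅Subgroup.closure {s}, A⁆ ≤ ⁅H, A⁆ :=
    Subgroup.commutator_mono le_sup_left le_rfl
  have h1 : ⁅Subgroup.closure {s}, H⁆ ≤ ⁅H, A⁆ := by
    rw [hH]; exact my_commutator_sup_right hss hsA
  have h2 : ⁅A, H⁆ ≤ ⁅H, A⁆ := (Subgroup.commutator_comm A H).le
  nth_rewrite 1 [hH]
  exact my_commutator_sup_left h1 h2

/-- Cards of the lower central series terms in a maximal class 5-group. -/
lemma my_card_lcs {G : Type*} [Group G] [Finite G] (n : ℕ) (hn : 2 ≤ n)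
    (hord : Nat.card G = 5 ^ n)
    (hmax : (⊤ : Subgroup G).lowerCentralSeries (n - 1) = ⊥)
    (hmax' : (⊤ : Subgroup G).lowerCentralSeries (n - 2) ≠ ⊥)
    (hcL1 : Nat.card ((⊤ : Subgroup G).lowerCentralSeries 1) = 5 ^ (n - 2))
    (j : ℕ) (hj1 : 1 ≤ j) (hj2 : j ≤ n - 1) :
    Nat.card ((⊤ : Subgroup G).lowerCentralSeries j) = 5 ^ (n - 1 - j) := by
  set L := (⊤ : Subgroup G).lowerCentralSeries with hL
  have hpow : ∀ i : ℕ, ∃ e ≤ n, Nat.card (L i) = 5 ^ e := by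
    intro i
    exact (Nat.dvd_prime_pow (by norm_num)).mp
      (hord ▸ Subgroup.card_subgroup_dvd_card (L i))
  have hstrict : ∀ i, i ≤ n - 2 → L (i + 1) < L i := by
    intro i hi
    refine lt_of_le_of_ne ((⊤ : Subgroup G).lowerCentralSeries_antitone (Nat.le_succ i)) ?_
    intro heq
    have hstab : ∀ m, L (i + m) = L i := by
      intro m
      induction m with
      | zero => rfl
      | succ m ih =>
        calc L (i + (m + 1)) = ⁅L (i + m), ⊤⁆ := my_lcs_succ (i + m)
          _ = ⁅L i, ⊤⁆ := by rw [ih]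
          _ = L (i + 1) := (my_lcs_succ i).symm
          _ = L i := heq
    have h1 : L (n - 1) = L i := by
      have := hstab (n - 1 - i); rwa [show i + (n - 1 - i) = n - 1 by omega] at this
    have h2 : L (n - 2) = L i := by
      have := hstab (n - 2 - i); rwa [show i + (n - 2 - i) = n - 2 by omega] at this
    exact hmax' (h2.trans (h1.symm.trans hmax))
  have hcard_lt : ∀ i, i ≤ n - 2 → Nat.card (L (i + 1)) < Nat.card (L i) := by
    intro i hi
    have hle : Nat.card (L (i + 1)) ≤ Nat.card (L i) :=
      Nat.le_of_dvd Nat.card_pos (Subgroup.card_dvd_of_le (hstrict i hi).le)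
    refine lt_of_le_of_ne hle ?_
    intro heq
    exact (hstrict i hi).ne (Subgroup.eq_of_le_of_card_ge (hstrict i hi).le heq.ge)
  have hupper : ∀ i, 1 + i ≤ n - 1 → Nat.card (L (1 + i)) ≤ 5 ^ (n - 2 - i) := by
    intro i
    induction i with
    | zero => intro _; simpa using hcL1.le
    | succ i ih =>
      intro hi
      have h1 : Nat.card (L (1 + i + 1)) < Nat.card (L (1 + i)) :=
        hcard_lt (1 + i) (by omega)
      have h2 := ih (by omega)
      obtain ⟨e, _, he⟩ := hpow (1 + i + 1)
      rw [show 1 + (i + 1) = 1 + i + 1 from rfl, he]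
      have hlt : 5 ^ e < 5 ^ (n - 2 - i) := lt_of_lt_of_le (he ▸ h1) h2
      have he2 : e < n - 2 - i := (Nat.pow_lt_pow_iff_right (by norm_num)).mp hlt
      exact Nat.pow_le_pow_right (by norm_num) (by omega)
  have hlower : ∀ t, t ≤ n - 2 → 5 ^ t ≤ Nat.card (L (n - 1 - t)) := by
    intro t
    induction t with
    | zero => intro _; simpa using Nat.one_le_iff_ne_zero.mpr Nat.card_pos.ne'
    | succ t ih =>
      intro ht
      have h2 := ih (by omega)
      have h1 : Nat.card (L ((n - 2 - t) + 1)) < Nat.card (L (n - 2 - t)) :=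
        hcard_lt (n - 2 - t) (by omega)
      rw [show n - 2 - t + 1 = n - 1 - t by omega] at h1
      obtain ⟨e, _, he⟩ := hpow (n - 2 - t)
      rw [he] at h1
      have hlt : 5 ^ t < 5 ^ e := lt_of_le_of_lt h2 h1
      have het : t < e := (Nat.pow_lt_pow_iff_right (by norm_num)).mp hlt
      rw [show n - 1 - (t + 1) = n - 2 - t by omega, he]
      exact Nat.pow_le_pow_right (by norm_num) (by omega)
  have h1 := hupper (j - 1) (by omega)
  have h2 := hlower (n - 1 - j) (by omega)
  rw [show 1 + (j - 1) = j by omega, show n - 2 - (j - 1) = n - 1 - j by omega] at h1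
  rw [show n - 1 - (n - 1 - j) = j by omega] at h2
  exact le_antisymm h1 h2

/-- Card of `⟨s⟩ ⊔ N` when the quotient by `N` has exponent 5 and `s ∉ N`. -/
lemma my_card_sup {G : Type*} [Group G] [Finite G] (N : Subgroup G) [N.Normal]
    (hexp : ∀ g : G ⧸ N, g ^ 5 = 1) (s : G) (hs : s ∉ N) :
    Nat.card ↥(Subgroup.closure {s} ⊔ N) = 5 * Nat.card N := by
  set H := Subgroup.closure {s} ⊔ N with hH
  set π := QuotientGroup.mk' N with hπ
  have hmap : Subgroup.map π H = Subgroup.zpowers (π s) := by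
    rw [hH, Subgroup.map_sup]
    have h1 : Subgroup.map π (Subgroup.closure {s}) = Subgroup.closure {π s} := by
      rw [MonoidHom.map_closure]; congr 1; simp
    have h2 : Subgroup.map π N = ⊥ := by
      rw [Subgroup.map_eq_bot_iff, QuotientGroup.ker_mk']
    rw [h1, h2, sup_bot_eq, Subgroup.zpowers_eq_closure]
  have hord : orderOf (π s) = 5 := by
    have hdvd : orderOf (π s) ∣ 5 := orderOf_dvd_of_pow_eq_one (hexp (π s))
    have hne : π s ≠ 1 := by
      intro h
      apply hs
      rwa [← QuotientGroup.ker_mk' N, MonoidHom.mem_ker]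
    rcases (Nat.prime_five).eq_one_or_self_of_dvd _ hdvd with h | h
    · exact absurd (orderOf_eq_one_iff.mp h) hne
    · exact h
  set φ := π.comp H.subtype with hφ
  have hker : φ.ker = N.subgroupOf H := by
    rw [hφ, ← MonoidHom.comap_ker, QuotientGroup.ker_mk']; rfl
  have hrange : φ.range = Subgroup.map π H := by
    rw [hφ, MonoidHom.range_comp, Subgroup.range_subtype]
  have hcard : Nat.card ↥H = Nat.card (↥H ⧸ φ.ker) * Nat.card φ.ker :=
    Subgroup.card_eq_card_quotient_mul_card_subgroup φ.ker
  have hq : Nat.card (↥H ⧸ φ.ker) = 5 := by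
    rw [Nat.card_congr (QuotientGroup.quotientKerEquivRange φ).toEquiv, hrange, hmap,
      Nat.card_zpowers, hord]
  have hkercard : Nat.card φ.ker = Nat.card N := by
    rw [hker]
    exact Nat.card_congr (Subgroup.subgroupOfEquivOfLe le_sup_right).toEquiv
  rw [hcard, hq, hkercard]

/-- Card of the abelianization of a subgroup. -/
lemma my_card_abelianization [Finite G] (H : Subgroup G) :
    Nat.card ↥H = Nat.card (Abelianization ↥H) * Nat.card ↥(⁅H, H⁆ : Subgroup G) := by
  have h1 : Nat.card ↥H =
      Nat.card (↥H ⧸ commutator ↥H) * Nat.card (commutator ↥H) :=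
    Subgroup.card_eq_card_quotient_mul_card_subgroup _
  have hmapcomm : Subgroup.map H.subtype (commutator ↥H) = ⁅H, H⁆ := by
    rw [commutator_def, Subgroup.map_commutator]
    rw [← MonoidHom.range_eq_map, Subgroup.range_subtype]
  have h2 : Nat.card (commutator ↥H) = Nat.card ↥(⁅H, H⁆ : Subgroup G) := by
    rw [← hmapcomm]
    exact Nat.card_congr
      (Subgroup.equivMapOfInjective _ _ (Subgroup.subtype_injective H)).toEquiv
  rw [h1, h2]
  rfl

end MyHelpers

/-- Orders of the abelianizations of the six maximal normal subgroups (Theorem 2.2, n ≥ 4). -/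
theorem abelianization_orders_of_maximal_subgroups {G : Type*} [Group G] [Finite G]
    [IsMulCommutative ((⊤ : Subgroup G).lowerCentralSeries 1)]
    (n : ℕ) (hn : 4 ≤ n)
    (hord : Nat.card G = 5 ^ n)
    (hmax : (⊤ : Subgroup G).lowerCentralSeries (n - 1) = ⊥)
    (hmax' : (⊤ : Subgroup G).lowerCentralSeries (n - 2) ≠ ⊥)
    (habel : Nonempty (Abelianization G ≃* Multiplicative (ZMod 5 × ZMod 5)))
    (k : ℕ)
    (hdef : ⁅(twoStepCentralizer G : Subgroup G), ((⊤ : Subgroup G).lowerCentralSeries 1 : Subgroup G)⁆ =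
      (⊤ : Subgroup G).lowerCentralSeries (n - k - 1)) (hk : k ≤ n - 4)
    (x y : G) (hx : x ∉ twoStepCentralizer G)
    (hy : y ∈ twoStepCentralizer G) (hy' : y ∉ (⊤ : Subgroup G).lowerCentralSeries 1)
    (hH1 : twoStepCentralizer G = Subgroup.closure {y} ⊔ (⊤ : Subgroup G).lowerCentralSeries 1) :
    (∀ i, 2 ≤ i → i ≤ 6 →
      Nat.card (Abelianization
        ↥(Subgroup.closure {x * y ^ (i - 2)} ⊔ (⊤ : Subgroup G).lowerCentralSeries 1)) = 5 ^ 2) ∧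
    Nat.card (Abelianization ↥(twoStepCentralizer G)) = 5 ^ (n - k - 1) := by
  -- notation
  -- γ₂(G) is contained in the two-step centralizer, since G is metabelian
  have hLle : (⊤ : Subgroup G).lowerCentralSeries 1 ≤ twoStepCentralizer G := by
    intro g hg u hu
    have hcomm : ⁅g, u⁆ = 1 := commutatorElement_eq_one_iff_commute.mpr
      (Subgroup.mul_comm_of_mem_isMulCommutative _ hg hu)
    rw [hcomm]; exact one_mem _
  haveI hχn : (twoStepCentralizer G).Normal := my_normal_of_commutator_le hLle
  -- exponent 5 of the abelianization
  have hexp5 : ∀ a : Multiplicative (ZMod 5 × ZMod 5), a ^ 5 = 1 := by decide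
  have hexpAb : ∀ g : Abelianization G, g ^ 5 = 1 := by
    intro g
    obtain ⟨e⟩ := habel
    apply e.injective
    rw [map_pow, hexp5 (e g), map_one]
  have hexp : ∀ g : G ⧸ (⊤ : Subgroup G).lowerCentralSeries 1, g ^ 5 = 1 := hexpAb
  -- card of the abelianization of G
  have habcard : Nat.card (Abelianization G) = 5 ^ 2 := by
    rw [Nat.card_congr habel.some.toEquiv]
    simp [Nat.card_eq_fintype_card]
  -- card of γ₂
  have hcL1 : Nat.card ((⊤ : Subgroup G).lowerCentralSeries 1) = 5 ^ (n - 2) := by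
    have hlag : Nat.card G =
        Nat.card (G ⧸ (⊤ : Subgroup G).lowerCentralSeries 1) * Nat.card ((⊤ : Subgroup G).lowerCentralSeries 1) :=
      Subgroup.card_eq_card_quotient_mul_card_subgroup _
    have hqab : Nat.card (G ⧸ (⊤ : Subgroup G).lowerCentralSeries 1) = 5 ^ 2 := habcard
    rw [hord, hqab] at hlag
    have h52 : (5 : ℕ) ^ n = 5 ^ 2 * 5 ^ (n - 2) := by
      rw [← pow_add]; congr 1; omega
    rw [h52] at hlag
    exact (Nat.eq_of_mul_eq_mul_left (by norm_num) hlag).symm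
  have hcardL : ∀ j, 1 ≤ j → j ≤ n - 1 →
      Nat.card ((⊤ : Subgroup G).lowerCentralSeries j) = 5 ^ (n - 1 - j) :=
    my_card_lcs n (by omega) hord hmax hmax' hcL1
  -- card of χ₂
  have hcardχ : Nat.card (twoStepCentralizer G) = 5 ^ (n - 1) := by
    rw [hH1, my_card_sup _ hexp y hy', hcL1, ← pow_succ']
    congr 1; omega
  -- any element outside χ₂ together with χ₂ generates G
  have htop : ∀ s : G, s ∉ twoStepCentralizer G →
      Subgroup.closure {s} ⊔ twoStepCentralizer G = ⊤ := by
    intro s hs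
    set K := Subgroup.closure {s} ⊔ twoStepCentralizer G with hK
    have hle : twoStepCentralizer G ≤ K := le_sup_right
    have hsK : s ∈ K := (le_sup_left : Subgroup.closure {s} ≤ K) (Subgroup.subset_closure rfl)
    have hne : twoStepCentralizer G ≠ K := fun h => hs (h ▸ hsK)
    have hdvd : Nat.card K ∣ 5 ^ n := hord ▸ Subgroup.card_subgroup_dvd_card K
    obtain ⟨e, helen, he⟩ := (Nat.dvd_prime_pow (by norm_num)).mp hdvd
    have hdvd2 : (5 : ℕ) ^ (n - 1) ∣ 5 ^ e := by
      rw [← hcardχ, ← he]; exact Subgroup.card_dvd_of_le hle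
    have hge : n - 1 ≤ e := (Nat.pow_dvd_pow_iff_le_right (by norm_num)).mp hdvd2
    have hnee : e ≠ n - 1 := by
      intro h
      apply hne
      exact Subgroup.eq_of_le_of_card_ge hle (by rw [he, h, hcardχ])
    have hen : e = n := by omega
    exact Subgroup.eq_top_of_card_eq K (by rw [he, hen, hord])
  -- the key commutator computation
  have hkey : ∀ s : G, s ∉ twoStepCentralizer G →
      ⁅Subgroup.closure {s} ⊔ (⊤ : Subgroup G).lowerCentralSeries 1, (⊤ : Subgroup G).lowerCentralSeries 1⁆ =
        (⊤ : Subgroup G).lowerCentralSeries 2 := by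
    intro s hs
    set L := (⊤ : Subgroup G).lowerCentralSeries with hLL
    set H := Subgroup.closure {s} ⊔ L 1 with hHdef
    haveI hHn : H.Normal := my_normal_of_commutator_le le_sup_right
    set N := (⁅H, L 1⁆ : Subgroup G) with hNdef
    haveI hNn : N.Normal := Subgroup.commutator_normal _ _
    have hNle : N ≤ L 2 := by
      rw [hLL, my_lcs_succ 1]
      calc N = ⁅H, (⊤ : Subgroup G).lowerCentralSeries 1⁆ := rfl
        _ ≤ ⁅⊤, (⊤ : Subgroup G).lowerCentralSeries 1⁆ := Subgroup.commutator_mono le_top le_rfl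
        _ = ⁅(⊤ : Subgroup G).lowerCentralSeries 1, ⊤⁆ := Subgroup.commutator_comm _ _
    set m := n - k - 1 with hm
    have hm3 : 3 ≤ m := by omega
    -- shifted inclusion
    have hstep1 : ∀ i, L (2 + i) ≤ N ⊔ L (m + i) := by
      intro i
      induction i with
      | zero =>
        have hLsplit : L 2 = ⁅L 1, ⊤⁆ := my_lcs_succ 1
        rw [show (2 : ℕ) + 0 = 2 from rfl, show m + 0 = m from rfl, hLsplit,
          ← htop s hs]
        have hb1 : ⁅L 1, Subgroup.closure {s}⁆ ≤ N ⊔ L m := by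
          refine le_trans ?_ le_sup_left
          rw [Subgroup.commutator_comm]
          exact Subgroup.commutator_mono le_sup_left le_rfl
        have hb2 : ⁅L 1, twoStepCentralizer G⁆ ≤ N ⊔ L m := by
          rw [Subgroup.commutator_comm, hdef]
          exact le_sup_right
        exact my_commutator_sup_right hb1 hb2
      | succ i ih =>
        have hLsplit : L (2 + i + 1) = ⁅L (2 + i), ⊤⁆ := my_lcs_succ (2 + i)
        rw [show 2 + (i + 1) = 2 + i + 1 from rfl, hLsplit]
        have h1 : ⁅L (2 + i), ⊤⁆ ≤ ⁅N ⊔ L (m + i), ⊤⁆ :=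
          Subgroup.commutator_mono ih le_rfl
        refine h1.trans ?_
        refine my_commutator_sup_left ?_ ?_
        · exact (Subgroup.commutator_le_left N ⊤).trans le_sup_left
        · rw [← my_lcs_succ (m + i)]
          exact le_sup_right
    -- iterate
    have hstep2 : ∀ i, L 2 ≤ N ⊔ L (m + i) := by
      intro i
      induction i with
      | zero => exact hstep1 0
      | succ i ih =>
        have ha := hstep1 (m + i - 2)
        rw [show 2 + (m + i - 2) = m + i by omega] at ha
        have hb : L (m + (m + i - 2)) ≤ L (m + i + 1) :=
          (⊤ : Subgroup G).lowerCentralSeries_antitone (by omega)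
        have hc : L (m + i) ≤ N ⊔ L (m + i + 1) := ha.trans (sup_le_sup_left hb N)
        exact ih.trans (sup_le le_sup_left hc)
    have hfin := hstep2 k
    rw [show m + k = n - 1 by omega, hmax, sup_bot_eq] at hfin
    exact le_antisymm hNle hfin
  -- commutators of the maximal subgroups
  have hcommH : ∀ s : G, s ∉ twoStepCentralizer G →
      (⁅Subgroup.closure {s} ⊔ (⊤ : Subgroup G).lowerCentralSeries 1,
        Subgroup.closure {s} ⊔ (⊤ : Subgroup G).lowerCentralSeries 1⁆ : Subgroup G) =
        (⊤ : Subgroup G).lowerCentralSeries 2 := by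
    intro s hs
    haveI : (Subgroup.closure {s} ⊔ (⊤ : Subgroup G).lowerCentralSeries 1).Normal :=
      my_normal_of_commutator_le le_sup_right
    rw [my_commutator_self ((⊤ : Subgroup G).lowerCentralSeries 1) s, hkey s hs]
  have hcommχ : (⁅(twoStepCentralizer G : Subgroup G), (twoStepCentralizer G : Subgroup G)⁆ :
      Subgroup G) = (⊤ : Subgroup G).lowerCentralSeries (n - k - 1) := by
    haveI : (Subgroup.closure {y} ⊔ (⊤ : Subgroup G).lowerCentralSeries 1).Normal := by
      rw [← hH1]; exact hχn
    calc (⁅(twoStepCentralizer G : Subgroup G), (twoStepCentralizer G : Subgroup G)⁆ :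
        Subgroup G)
        = ⁅Subgroup.closure {y} ⊔ (⊤ : Subgroup G).lowerCentralSeries 1,
            Subgroup.closure {y} ⊔ (⊤ : Subgroup G).lowerCentralSeries 1⁆ := by rw [← hH1]
      _ = ⁅Subgroup.closure {y} ⊔ (⊤ : Subgroup G).lowerCentralSeries 1, (⊤ : Subgroup G).lowerCentralSeries 1⁆ :=
          my_commutator_self ((⊤ : Subgroup G).lowerCentralSeries 1) y
      _ = ⁅(twoStepCentralizer G : Subgroup G), ((⊤ : Subgroup G).lowerCentralSeries 1 : Subgroup G)⁆ := by
          rw [← hH1]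
      _ = (⊤ : Subgroup G).lowerCentralSeries (n - k - 1) := hdef
  constructor
  · -- the five maximal subgroups other than χ₂
    intro i hi2 hi6
    set s := x * y ^ (i - 2) with hs
    have hsχ : s ∉ twoStepCentralizer G := by
      intro h
      apply hx
      have hxeq : x = s * (y ^ (i - 2))⁻¹ := by rw [hs]; group
      rw [hxeq]
      exact mul_mem h (inv_mem (pow_mem hy _))
    have hs1 : s ∉ (⊤ : Subgroup G).lowerCentralSeries 1 := fun h => hsχ (hLle h)
    have hc := my_card_abelianization (Subgroup.closure {s} ⊔ (⊤ : Subgroup G).lowerCentralSeries 1)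
    rw [hcommH s hsχ, my_card_sup _ hexp s hs1, hcL1,
      hcardL 2 (by omega) (by omega)] at hc
    have harith : (5 : ℕ) * 5 ^ (n - 2) = 5 ^ 2 * 5 ^ (n - 1 - 2) := by
      rw [← pow_succ', ← pow_add]; congr 1; omega
    rw [harith] at hc
    exact (Nat.eq_of_mul_eq_mul_right (by positivity) hc.symm)
  · -- χ₂ itself
    have hc := my_card_abelianization (twoStepCentralizer G)
    rw [hcommχ, hcardχ, hcardL (n - k - 1) (by omega) (by omega)] at hc
    have harith : (5 : ℕ) ^ (n - 1) = 5 ^ (n - k - 1) * 5 ^ (n - 1 - (n - k - 1)) := by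
      rw [← pow_add]; congr 1; omega
    rw [harith] at hc
    exact (Nat.eq_of_mul_eq_mul_right (by positivity) hc.symm)
end

section
/- Let G be a 5-group of order 5^n with n ≥ 4 such that G/γ_2(G) is of type (5, 5). If G is of maximal class, then G admits a maximal normal subgroup H with |H / γ_2(H)| = 5^2. -/
open Subgroup
open scoped commutatorElement

section Helpers
variable {G : Type*} [Group G]

private lemma lcs_succ' (k : ℕ) :
    (⊤ : Subgroup G).lowerCentralSeries (k + 1) = ⁅(⊤ : Subgroup G).lowerCentralSeries k, (⊤ : Subgroup G)⁆ := rfl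

private lemma lcs_map_surj {G' : Type*} [Group G'] (f : G →* G')
    (hf : Function.Surjective f) (k : ℕ) :
    ((⊤ : Subgroup G).lowerCentralSeries k).map f = (⊤ : Subgroup G').lowerCentralSeries k := by
  induction k with
  | zero => simpa using Subgroup.map_top_of_surjective f hf
  | succ k ih =>
      rw [lcs_succ', lcs_succ', Subgroup.map_commutator, ih,
        Subgroup.map_top_of_surjective f hf]

private lemma lcs_step {k : ℕ}
    (h : (⊤ : Subgroup G).lowerCentralSeries k ≤ (⊤ : Subgroup G).lowerCentralSeries (k + 1)) (j : ℕ) :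
    (⊤ : Subgroup G).lowerCentralSeries (k + j) ≤ (⊤ : Subgroup G).lowerCentralSeries (k + j + 1) := by
  induction j with
  | zero => exact h
  | succ j ih =>
      have : k + (j + 1) = (k + j) + 1 := by ring
      rw [this, lcs_succ' (k + j), lcs_succ' (k + j + 1)]
      exact Subgroup.commutator_mono ih le_rfl

private lemma lcs_chain {k : ℕ}
    (h : (⊤ : Subgroup G).lowerCentralSeries k ≤ (⊤ : Subgroup G).lowerCentralSeries (k + 1)) (j : ℕ) :
    (⊤ : Subgroup G).lowerCentralSeries k ≤ (⊤ : Subgroup G).lowerCentralSeries (k + j) := by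
  induction j with
  | zero => exact le_rfl
  | succ j ih => exact ih.trans (lcs_step h j)

private lemma eq_of_le_of_card_le' [Finite G] {A B : Subgroup G} (h : A ≤ B)
    (hc : Nat.card B ≤ Nat.card A) : A = B := by
  have hAB : Nat.card (A.subgroupOf B) = Nat.card B := by
    rw [Nat.card_congr (Subgroup.subgroupOfEquivOfLe h).toEquiv]
    exact le_antisymm (Subgroup.card_le_of_le h) hc
  have := Subgroup.eq_top_of_card_eq (A.subgroupOf B) (by rw [hAB])
  exact le_antisymm h ((Subgroup.subgroupOf_eq_top).mp this)

private lemma card_lt_of_lt [Finite G] {A B : Subgroup G} (h : A < B) :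
    Nat.card A < Nat.card B :=
  lt_of_le_of_ne (Subgroup.card_le_of_le h.le)
    (fun he => h.ne (eq_of_le_of_card_le' h.le he.ge))

private lemma commutator_mem_of_closure {S : Set G} {K : Subgroup G} [hK : K.Normal]
    (hS : ∀ x ∈ S, ∀ y ∈ S, ⁅x, y⁆ ∈ K) :
    ∀ a ∈ closure S, ∀ b ∈ closure S, ⁅a, b⁆ ∈ K := by
  intro a ha b hb
  refine closure_induction₂ (p := fun x y _ _ => ⁅x, y⁆ ∈ K)
    (fun x y hx hy => hS x hx y hy) ?_ ?_ ?_ ?_ ?_ ?_ ha hb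
  · intro x _; simpa using one_mem K
  · intro x _; simpa using one_mem K
  · intro x y z _ _ _ hxz hyz
    have h : ⁅x * y, z⁆ = (x * ⁅y, z⁆ * x⁻¹) * ⁅x, z⁆ := by
      simp only [commutatorElement_def]; group
    rw [h]
    exact mul_mem (hK.conj_mem _ hyz x) hxz
  · intro y z x _ _ _ hxy hxz
    have h : ⁅x, y * z⁆ = ⁅x, y⁆ * (y * ⁅x, z⁆ * y⁻¹) := by
      simp only [commutatorElement_def]; group
    rw [h]
    exact mul_mem hxy (hK.conj_mem _ hxz y)
  · intro x y _ _ hxy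
    have h : ⁅x⁻¹, y⁆ = x⁻¹ * ⁅x, y⁆⁻¹ * x := by
      simp only [commutatorElement_def]; group
    rw [h]
    simpa using hK.conj_mem _ (inv_mem hxy) x⁻¹
  · intro x y _ _ hxy
    have h : ⁅x, y⁻¹⁆ = y⁻¹ * ⁅x, y⁆⁻¹ * y := by
      simp only [commutatorElement_def]; group
    rw [h]
    simpa using hK.conj_mem _ (inv_mem hxy) y⁻¹

end Helpers

/-- A 5-group of order `5^n` (n ≥ 4) with abelianization of type (5,5) which is of maximal
class admits a maximal normal subgroup whose abelianization has order `5^2` (Lemma 2.1). -/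
theorem exists_maximal_normal_subgroup_of_maximal_class {G : Type*} [Group G] [Finite G] (n : ℕ) (hn : 4 ≤ n)
    (hord : Nat.card G = 5 ^ n)
    (habel : Nonempty (Abelianization G ≃* Multiplicative (ZMod 5 × ZMod 5)))
    (hmax : (⊤ : Subgroup G).lowerCentralSeries (n - 1) = ⊥)
    (hmax' : (⊤ : Subgroup G).lowerCentralSeries (n - 2) ≠ ⊥) :
    ∃ H : Subgroup G, IsCoatom H ∧ H.Normal ∧ Nat.card (Abelianization ↥H) = 5 ^ 2 := by
  obtain ⟨e⟩ := habel
  have h5 : Nat.Prime 5 := by norm_num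
  have hpow : ∀ K : Subgroup G, ∃ k, Nat.card K = 5 ^ k := by
    intro K
    obtain ⟨k, -, hk⟩ := (Nat.dvd_prime_pow h5).mp
      (hord ▸ Subgroup.card_subgroup_dvd_card K)
    exact ⟨k, hk⟩
  -- abelianization facts
  have e' : (G ⧸ (⊤ : Subgroup G).lowerCentralSeries 1) ≃* Multiplicative (ZMod 5 × ZMod 5) :=
    (QuotientGroup.quotientMulEquivOfEq Subgroup.top_lowerCentralSeries_one).trans e
  have hcardAb : Nat.card (G ⧸ (⊤ : Subgroup G).lowerCentralSeries 1) = 25 := by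
    rw [Nat.card_congr e'.toEquiv, Nat.card_eq_fintype_card]; rfl
  have hM5 : ∀ m : Multiplicative (ZMod 5 × ZMod 5), m ^ 5 = 1 := by decide
  have hcard1 : Nat.card ((⊤ : Subgroup G).lowerCentralSeries 1) = 5 ^ (n - 2) := by
    have h := Subgroup.card_eq_card_quotient_mul_card_subgroup ((⊤ : Subgroup G).lowerCentralSeries 1)
    rw [hord, hcardAb] at h
    have h2 : 25 * 5 ^ (n - 2) = (5 : ℕ) ^ n := by
      rw [show (25 : ℕ) = 5 ^ 2 by norm_num, ← pow_add]
      congr 1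
      omega
    exact Nat.eq_of_mul_eq_mul_left (by norm_num) (h.symm.trans h2.symm)
  -- strict descent
  have hstrict : ∀ k, k ≤ n - 2 →
      (⊤ : Subgroup G).lowerCentralSeries (k + 1) < (⊤ : Subgroup G).lowerCentralSeries k := by
    intro k hk
    refine lt_of_le_of_ne (Subgroup.lowerCentralSeries_antitone (S := (⊤ : Subgroup G)) (Nat.le_succ k)) fun he => ?_
    have h1 : (⊤ : Subgroup G).lowerCentralSeries k ≤ (⊤ : Subgroup G).lowerCentralSeries (k + 1) := he.ge
    have h2 : (⊤ : Subgroup G).lowerCentralSeries k = ⊥ := by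
      have h3 := lcs_chain h1 (n - 1 - k)
      rw [show k + (n - 1 - k) = n - 1 by omega, hmax] at h3
      exact le_bot_iff.mp h3
    exact hmax' (le_bot_iff.mp (h2 ▸ Subgroup.lowerCentralSeries_antitone (S := (⊤ : Subgroup G)) (by omega : k ≤ n - 2)))
  have hlow : ∀ j, j ≤ n - 2 → 5 ^ j ≤ Nat.card ((⊤ : Subgroup G).lowerCentralSeries (n - 1 - j)) := by
    intro j
    induction j with
    | zero =>
        intro _
        have hb : (⊤ : Subgroup G).lowerCentralSeries (n - 1 - 0) = ⊥ := by simpa using hmax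
        rw [hb]
        simp [Subgroup.card_bot]
    | succ j ih =>
        intro hj
        have hlt : (⊤ : Subgroup G).lowerCentralSeries (n - 1 - j) < (⊤ : Subgroup G).lowerCentralSeries (n - 1 - (j + 1)) := by
          have h := hstrict (n - 2 - j) (by omega)
          rwa [show n - 2 - j + 1 = n - 1 - j by omega,
            show n - 2 - j = n - 1 - (j + 1) by omega] at h
        obtain ⟨a, ha⟩ := hpow ((⊤ : Subgroup G).lowerCentralSeries (n - 1 - (j + 1)))
        obtain ⟨b, hb⟩ := hpow ((⊤ : Subgroup G).lowerCentralSeries (n - 1 - j))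
        have h1 : 5 ^ j ≤ 5 ^ b := hb ▸ ih (by omega)
        have h2 : (5 : ℕ) ^ b < 5 ^ a := by
          rw [← ha, ← hb]; exact card_lt_of_lt hlt
        have hjb : j ≤ b := (Nat.pow_le_pow_iff_right (by norm_num)).mp h1
        have hba : b < a := (Nat.pow_lt_pow_iff_right (by norm_num)).mp h2
        rw [ha]
        exact Nat.pow_le_pow_right (by norm_num) (by omega)
  -- exact cards
  have hcard2 : Nat.card ((⊤ : Subgroup G).lowerCentralSeries 2) = 5 ^ (n - 3) := by
    obtain ⟨b, hb⟩ := hpow ((⊤ : Subgroup G).lowerCentralSeries 2)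
    have hlt : Nat.card ((⊤ : Subgroup G).lowerCentralSeries 2) < Nat.card ((⊤ : Subgroup G).lowerCentralSeries 1) :=
      card_lt_of_lt (hstrict 1 (by omega))
    have hlo := hlow (n - 3) (by omega)
    rw [show n - 1 - (n - 3) = 2 by omega] at hlo
    rw [hb, hcard1] at hlt
    rw [hb] at hlo ⊢
    have h1 : n - 3 ≤ b := (Nat.pow_le_pow_iff_right (by norm_num)).mp hlo
    have h2 : b < n - 2 := (Nat.pow_lt_pow_iff_right (by norm_num)).mp hlt
    congr 1
    omega
  have hcard3 : Nat.card ((⊤ : Subgroup G).lowerCentralSeries 3) = 5 ^ (n - 4) := by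
    obtain ⟨b, hb⟩ := hpow ((⊤ : Subgroup G).lowerCentralSeries 3)
    have hlt : Nat.card ((⊤ : Subgroup G).lowerCentralSeries 3) < Nat.card ((⊤ : Subgroup G).lowerCentralSeries 2) :=
      card_lt_of_lt (hstrict 2 (by omega))
    have hlo := hlow (n - 4) (by omega)
    rw [show n - 1 - (n - 4) = 3 by omega] at hlo
    rw [hb, hcard2] at hlt
    rw [hb] at hlo ⊢
    have h1 : n - 4 ≤ b := (Nat.pow_le_pow_iff_right (by norm_num)).mp hlo
    have h2 : b < n - 3 := (Nat.pow_lt_pow_iff_right (by norm_num)).mp hlt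
    congr 1
    omega
  -- existence of s, u
  have hexists : ¬ ∀ g : G, ∀ u ∈ (⊤ : Subgroup G).lowerCentralSeries 1, ⁅g, u⁆ ∈ (⊤ : Subgroup G).lowerCentralSeries 3 := by
    intro hall
    have h23 : (⊤ : Subgroup G).lowerCentralSeries 2 ≤ (⊤ : Subgroup G).lowerCentralSeries 3 := by
      rw [lcs_succ' 1, Subgroup.commutator_le]
      intro p hp q _
      have h := hall q p hp
      rw [← commutatorElement_inv]
      exact inv_mem h
    have h := lcs_chain h23 (n - 3)
    rw [show 2 + (n - 3) = n - 1 by omega, hmax] at h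
    exact hmax' (le_bot_iff.mp ((Subgroup.lowerCentralSeries_antitone (S := (⊤ : Subgroup G)) (by omega : 2 ≤ n - 2)).trans h))
  push_neg at hexists
  obtain ⟨s, u, hu, hsu⟩ := hexists
  -- s ∉ γ₂(G)
  have hs1 : s ∉ (⊤ : Subgroup G).lowerCentralSeries 1 := by
    intro hs
    have hsur : Function.Surjective (QuotientGroup.mk' ((⊤ : Subgroup G).lowerCentralSeries 3)) :=
      QuotientGroup.mk'_surjective _
    set Q := G ⧸ (⊤ : Subgroup G).lowerCentralSeries 3
    set π := QuotientGroup.mk' ((⊤ : Subgroup G).lowerCentralSeries 3)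
    have h3 : (⊤ : Subgroup Q).lowerCentralSeries 3 = ⊥ := by
      rw [← lcs_map_surj π hsur 3]
      exact (Subgroup.map_eq_bot_iff _).mpr (QuotientGroup.ker_mk' _).ge
    have key : ⁅⁅(⊤ : Subgroup Q), (⊤ : Subgroup Q)⁆, (⊤ : Subgroup Q).lowerCentralSeries 1⁆ = ⊥ := by
      apply Subgroup.commutator_commutator_eq_bot_of_rotate
      · have hcc : ⁅(⊤ : Subgroup Q), (⊤ : Subgroup Q).lowerCentralSeries 1⁆ = (⊤ : Subgroup Q).lowerCentralSeries 2 := by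
          rw [Subgroup.commutator_comm]; rfl
        rw [hcc]
        exact h3
      · exact h3
    have hmem : ⁅π s, π u⁆ ∈ (⊥ : Subgroup Q) := by
      rw [← key]
      have hπ : ∀ x ∈ (⊤ : Subgroup G).lowerCentralSeries 1, π x ∈ (⊤ : Subgroup Q).lowerCentralSeries 1 := by
        intro x hx
        rw [← lcs_map_surj π hsur 1]
        exact Subgroup.mem_map_of_mem π hx
      exact Subgroup.commutator_mem_commutator (hπ s hs) (hπ u hu)
    rw [← map_commutatorElement, Subgroup.mem_bot] at hmem
    exact hsu ((QuotientGroup.eq_one_iff _).mp hmem)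
  -- the maximal subgroup H
  set H : Subgroup G := Subgroup.closure {s} ⊔ (⊤ : Subgroup G).lowerCentralSeries 1 with hHdef
  have hL1H : (⊤ : Subgroup G).lowerCentralSeries 1 ≤ H := le_sup_right
  have hsH : s ∈ H := (le_sup_left : Subgroup.closure {s} ≤ H) (Subgroup.subset_closure rfl)
  have hHnormal : H.Normal := by
    constructor
    intro x hx g
    have h1 : ⁅g, x⁆ ∈ H := by
      apply hL1H
      rw [lcs_succ' 0, Subgroup.lowerCentralSeries_zero]
      exact Subgroup.commutator_mem_commutator (Subgroup.mem_top g) (Subgroup.mem_top x)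
    have h2 : g * x * g⁻¹ = ⁅g, x⁆ * x := by
      simp only [commutatorElement_def]; group
    rw [h2]
    exact mul_mem h1 hx
  -- the cardinality of H
  have hcardH : Nat.card H = 5 ^ (n - 1) := by
    set φ := (QuotientGroup.mk' ((⊤ : Subgroup G).lowerCentralSeries 1)).domRestrict H with hφ
    have hker : φ.ker = ((⊤ : Subgroup G).lowerCentralSeries 1).subgroupOf H := by
      rw [hφ, MonoidHom.ker_domRestrict, QuotientGroup.ker_mk']
    have hmapbot : ((⊤ : Subgroup G).lowerCentralSeries 1).map (QuotientGroup.mk' ((⊤ : Subgroup G).lowerCentralSeries 1)) = ⊥ :=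
      (Subgroup.map_eq_bot_iff _).mpr (QuotientGroup.ker_mk' _).ge
    have hmap : H.map (QuotientGroup.mk' ((⊤ : Subgroup G).lowerCentralSeries 1)) =
        Subgroup.zpowers ((QuotientGroup.mk' ((⊤ : Subgroup G).lowerCentralSeries 1)) s) := by
      rw [hHdef, Subgroup.map_sup, hmapbot, sup_bot_eq, MonoidHom.map_closure,
        Set.image_singleton, ← Subgroup.zpowers_eq_closure]
    have hcardrange : Nat.card φ.range = 5 := by
      rw [hφ, MonoidHom.domRestrict_range, hmap, Nat.card_zpowers]
      have h1 : (QuotientGroup.mk' ((⊤ : Subgroup G).lowerCentralSeries 1)) s ≠ 1 := by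
        intro hone
        exact hs1 ((QuotientGroup.eq_one_iff _).mp hone)
      have h2 : ((QuotientGroup.mk' ((⊤ : Subgroup G).lowerCentralSeries 1)) s) ^ 5 = 1 := by
        have h3 := hM5 (e' ((QuotientGroup.mk' ((⊤ : Subgroup G).lowerCentralSeries 1)) s))
        rw [← map_pow] at h3
        have h4 : e' (((QuotientGroup.mk' ((⊤ : Subgroup G).lowerCentralSeries 1)) s) ^ 5) = e' 1 := by
          rw [map_one]; exact h3
        exact e'.injective h4
      rcases (h5.eq_one_or_self_of_dvd _ (orderOf_dvd_of_pow_eq_one h2)) with h | h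
      · exact absurd (orderOf_eq_one_iff.mp h) h1
      · exact h
    have hcardker : Nat.card φ.ker = 5 ^ (n - 2) := by
      rw [hker, ← hcard1]
      exact Nat.card_congr (Subgroup.subgroupOfEquivOfLe hL1H).toEquiv
    have hq : Nat.card (↥H ⧸ φ.ker) = 5 := by
      rw [Nat.card_congr (QuotientGroup.quotientKerEquivRange φ).toEquiv, hcardrange]
    have h := Subgroup.card_eq_card_quotient_mul_card_subgroup φ.ker
    rw [hq, hcardker] at h
    rw [h, show n - 1 = (n - 2) + 1 by omega]
    ring
  -- H is a coatom
  have hcoatom : IsCoatom H := by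
    constructor
    · intro htop
      have h1 : Nat.card H = 5 ^ n := by
        rw [htop, Subgroup.card_top, hord]
      rw [hcardH] at h1
      have h2 : (5 : ℕ) ^ (n - 1) < 5 ^ n := Nat.pow_lt_pow_right (by norm_num) (by omega)
      omega
    · intro K hK
      obtain ⟨k, hk⟩ := hpow K
      have h1 : Nat.card H < Nat.card K := card_lt_of_lt hK
      have h2 : Nat.card ↥K ∣ 5 ^ n := hord ▸ Subgroup.card_subgroup_dvd_card K
      rw [hk] at h1 h2
      rw [hcardH] at h1
      have hkn : k ≤ n := (Nat.pow_dvd_pow_iff_le_right (by norm_num)).mp h2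
      have hk1 : n - 1 < k := (Nat.pow_lt_pow_iff_right (by norm_num)).mp h1
      have h3 : Nat.card K = Nat.card G := by
        rw [hk, hord]
        congr 1
        omega
      exact Subgroup.eq_top_of_card_eq K h3
  -- the commutator subgroup of H equals γ₃(G)
  haveI : H.Normal := hHnormal
  have hCnormal : Subgroup.Normal ⁅H, H⁆ := Subgroup.commutator_normal H H
  haveI := hCnormal
  have hCle : ⁅H, H⁆ ≤ (⊤ : Subgroup G).lowerCentralSeries 2 := by
    have hSH : H = Subgroup.closure ({s} ∪ ((⊤ : Subgroup G).lowerCentralSeries 1 : Set G)) := by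
      rw [Subgroup.closure_union, Subgroup.closure_eq, hHdef]
    have hgen : ∀ x ∈ ({s} ∪ ((⊤ : Subgroup G).lowerCentralSeries 1 : Set G)),
        ∀ y ∈ ({s} ∪ ((⊤ : Subgroup G).lowerCentralSeries 1 : Set G)), ⁅x, y⁆ ∈ (⊤ : Subgroup G).lowerCentralSeries 2 := by
      rintro x hx y hy
      rcases hx with hx | hx
      · rcases hy with hy | hy
        · rw [Set.mem_singleton_iff] at hx hy
          rw [hx, hy, commutatorElement_self]
          exact one_mem _
        · have h1 : ⁅y, x⁆ ∈ (⊤ : Subgroup G).lowerCentralSeries 2 := by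
            rw [lcs_succ' 1]
            exact Subgroup.commutator_mem_commutator hy (Subgroup.mem_top x)
          rw [← commutatorElement_inv]
          exact inv_mem h1
      · rw [lcs_succ' 1]
        exact Subgroup.commutator_mem_commutator hx (Subgroup.mem_top y)
    rw [Subgroup.commutator_le]
    intro a ha b hb
    rw [hSH] at ha hb
    exact commutator_mem_of_closure hgen a ha b hb
  have hsuC : ⁅s, u⁆ ∈ ⁅H, H⁆ := Subgroup.commutator_mem_commutator hsH (hL1H hu)
  have hNeq : ⁅H, H⁆ ⊔ (⊤ : Subgroup G).lowerCentralSeries 3 = (⊤ : Subgroup G).lowerCentralSeries 2 := by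
    have hle : ⁅H, H⁆ ⊔ (⊤ : Subgroup G).lowerCentralSeries 3 ≤ (⊤ : Subgroup G).lowerCentralSeries 2 :=
      sup_le hCle (Subgroup.lowerCentralSeries_antitone (S := (⊤ : Subgroup G)) (by omega))
    have hlt : (⊤ : Subgroup G).lowerCentralSeries 3 < ⁅H, H⁆ ⊔ (⊤ : Subgroup G).lowerCentralSeries 3 := by
      refine lt_of_le_of_ne le_sup_right fun he => ?_
      exact hsu (he ▸ Subgroup.mem_sup_left hsuC)
    obtain ⟨k, hk⟩ := hpow (⁅H, H⁆ ⊔ (⊤ : Subgroup G).lowerCentralSeries 3)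
    have h1 := card_lt_of_lt hlt
    have h2 := Subgroup.card_dvd_of_le hle
    rw [hcard3, hk] at h1
    rw [hcard2, hk] at h2
    have h3 : n - 4 < k := (Nat.pow_lt_pow_iff_right (by norm_num)).mp h1
    have h4 : k ≤ n - 3 := (Nat.pow_dvd_pow_iff_le_right (by norm_num)).mp h2
    refine eq_of_le_of_card_le' hle ?_
    rw [hcard2, hk]
    exact Nat.pow_le_pow_right (by norm_num) (by omega)
  have hCeq : ⁅H, H⁆ = (⊤ : Subgroup G).lowerCentralSeries 2 := by
    refine le_antisymm hCle ?_
    have hsur : Function.Surjective (QuotientGroup.mk' ⁅H, H⁆) :=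
      QuotientGroup.mk'_surjective _
    set π := QuotientGroup.mk' ⁅H, H⁆ with hπdef
    have h23 : (⊤ : Subgroup (G ⧸ ⁅H, H⁆)).lowerCentralSeries 2 ≤ (⊤ : Subgroup (G ⧸ ⁅H, H⁆)).lowerCentralSeries 3 := by
      rw [← lcs_map_surj π hsur 2, ← lcs_map_surj π hsur 3, ← hNeq, Subgroup.map_sup,
        (Subgroup.map_eq_bot_iff _).mpr (QuotientGroup.ker_mk' _).ge, bot_sup_eq]
    have hchain := lcs_chain h23 (n - 3)
    rw [show 2 + (n - 3) = n - 1 by omega] at hchain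
    have hbot : (⊤ : Subgroup (G ⧸ ⁅H, H⁆)).lowerCentralSeries (n - 1) = ⊥ := by
      rw [← lcs_map_surj π hsur (n - 1), hmax, Subgroup.map_bot]
    have h2 : ((⊤ : Subgroup G).lowerCentralSeries 2).map π = ⊥ := by
      rw [lcs_map_surj π hsur 2]
      exact le_bot_iff.mp (hbot ▸ hchain)
    have h3 := (Subgroup.map_eq_bot_iff _).mp h2
    rwa [QuotientGroup.ker_mk'] at h3
  -- conclusion
  refine ⟨H, hcoatom, hHnormal, ?_⟩
  have hcomm : (commutator ↥H).map H.subtype = ⁅H, H⁆ := by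
    rw [_root_.commutator_def, Subgroup.map_commutator, ← MonoidHom.range_eq_map,
      Subgroup.range_subtype]
  have hcardcomm : Nat.card (commutator ↥H) = 5 ^ (n - 3) := by
    rw [← hcard2, ← hCeq, ← hcomm]
    exact Nat.card_congr
      ((commutator ↥H).equivMapOfInjective H.subtype H.subtype_injective).toEquiv
  have hfin := Subgroup.card_eq_card_quotient_mul_card_subgroup (commutator ↥H)
  rw [hcardH, hcardcomm] at hfin
  have hAb : Nat.card (Abelianization ↥H) = Nat.card (↥H ⧸ commutator ↥H) := rfl
  rw [hAb]
  have hpos : (0 : ℕ) < 5 ^ (n - 3) := Nat.pow_pos (by norm_num)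
  refine Nat.eq_of_mul_eq_mul_right hpos ?_
  rw [← hfin, ← pow_add]
  congr 1
  omega
end

section
/- Let G be a 5-group of order 5^n with n ≥ 4 such that G/γ_2(G) is of type (5, 5). If G is of maximal class, then G admits at least five distinct maximal normal subgroups H with |H / γ_2(H)| = 5^2. -/
open Subgroup
open scoped commutatorElement


private def vec6 : Fin 6 → ZMod 5 × ZMod 5 := ![(1,0),(1,1),(1,2),(1,3),(1,4),(0,1)]

private lemma cardW : Nat.card (Multiplicative (ZMod 5 × ZMod 5)) = 25 := by
  simp [Nat.card_eq_fintype_card]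

private lemma orderOf_vec6 (k : Fin 6) : orderOf (Multiplicative.ofAdd (vec6 k)) = 5 := by
  have h1 : Multiplicative.ofAdd (vec6 k) ≠ 1 := by
    have h : vec6 k ≠ 0 := by revert k; decide
    simpa using h
  have h5 : (Multiplicative.ofAdd (vec6 k)) ^ 5 = 1 := by
    rw [← ofAdd_nsmul]
    have : (5 : ℕ) • vec6 k = 0 := by revert k; decide
    simp [this]
  rcases (Nat.Prime.eq_one_or_self_of_dvd (by norm_num) _
      (orderOf_dvd_of_pow_eq_one h5)) with h | h
  · exact absurd (orderOf_eq_one_iff.mp h) h1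
  · exact h

private lemma vec6_inj : ∀ i j : Fin 6,
    (∃ c : ZMod 5, c * (vec6 i).1 = (vec6 j).1 ∧ c * (vec6 i).2 = (vec6 j).2) → i = j := by
  decide

private lemma zpowers_vec6_inj :
    Function.Injective (fun k : Fin 6 => Subgroup.zpowers (Multiplicative.ofAdd (vec6 k))) := by
  intro i j h
  have hx : Multiplicative.ofAdd (vec6 j) ∈ Subgroup.zpowers (Multiplicative.ofAdd (vec6 i)) := by
    simp only at h; rw [h]; exact Subgroup.mem_zpowers _
  obtain ⟨m, hm⟩ := hx
  simp only at hm
  rw [← ofAdd_zsmul] at hm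
  have hm' : m • vec6 i = vec6 j := by simpa using hm
  refine vec6_inj i j ⟨(m : ZMod 5), ?_, ?_⟩
  · have := congrArg Prod.fst hm'
    simpa [zsmul_eq_mul] using this
  · have := congrArg Prod.snd hm'
    simpa [zsmul_eq_mul] using this


private lemma coatom_of_card_five {W : Type*} [Group W] [Finite W] (hW : Nat.card W = 25)
    {K : Subgroup W} (hK : Nat.card K = 5) : IsCoatom K := by
  constructor
  · intro h
    rw [h, Subgroup.card_top, hW] at hK
    norm_num at hK
  · intro L hL
    have hdvd : Nat.card L ∣ 5 ^ 2 := by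
      have := Subgroup.card_subgroup_dvd_card L
      rwa [hW] at this
    obtain ⟨e, he, hLe⟩ := (Nat.dvd_prime_pow (by norm_num)).mp hdvd
    have h5 : (5 : ℕ) ∣ Nat.card L := hK ▸ Subgroup.card_dvd_of_le hL.le
    have hne : Nat.card L ≠ 5 := by
      intro h
      exact hL.ne (Subgroup.eq_of_le_of_card_ge hL.le (by rw [h, hK]))
    interval_cases e
    · rw [hLe] at h5; norm_num at h5
    · rw [hLe] at hne; norm_num at hne
    · exact Subgroup.eq_top_of_card_eq L (by rw [hLe, hW]; norm_num)

private lemma coatom_comap_of_surjective {G W : Type*} [Group G] [Group W] {φ : G →* W}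
    (hφ : Function.Surjective φ) {K : Subgroup W} (hK : IsCoatom K) :
    IsCoatom (K.comap φ) := by
  constructor
  · intro h
    have h2 := Subgroup.map_comap_eq_self_of_surjective hφ K
    rw [h, ← MonoidHom.range_eq_map, MonoidHom.range_eq_top.mpr hφ] at h2
    exact hK.1 h2.symm
  · intro M hM
    have hker : φ.ker ≤ M := le_trans (Subgroup.ker_le_comap φ K) hM.le
    have hKle : K ≤ M.map φ := by
      have := Subgroup.map_mono (f := φ) hM.le
      rwa [Subgroup.map_comap_eq_self_of_surjective hφ K] at this
    have hKlt : K < M.map φ := by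
      refine lt_of_le_of_ne hKle fun h => ?_
      have := Subgroup.comap_map_eq_self hker
      rw [← h] at this
      exact hM.ne this
    have htop := hK.2 _ hKlt
    have := Subgroup.comap_map_eq_self hker
    rw [htop, Subgroup.comap_top] at this
    exact this.symm

private lemma lcs_stab' {G : Type*} [Group G] (k : ℕ)
    (h : (⊤ : Subgroup G).lowerCentralSeries (k + 1) = (⊤ : Subgroup G).lowerCentralSeries k) (m : ℕ) :
    (⊤ : Subgroup G).lowerCentralSeries (k + m) = (⊤ : Subgroup G).lowerCentralSeries k := by
  induction m with
  | zero => rfl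
  | succ m ih =>
    have h2 : (⊤ : Subgroup G).lowerCentralSeries (k + (m + 1)) = ⁅(⊤ : Subgroup G).lowerCentralSeries (k + m), ⊤⁆ := rfl
    rw [h2, ih]
    exact h

private lemma card_lcs {G : Type*} [Group G] [Finite G] (n : ℕ) (hn : 4 ≤ n)
    (hord : Nat.card G = 5 ^ n)
    (hc1 : Nat.card ((⊤ : Subgroup G).lowerCentralSeries 1) = 5 ^ (n - 2))
    (hmax : (⊤ : Subgroup G).lowerCentralSeries (n - 1) = ⊥)
    (hmax' : (⊤ : Subgroup G).lowerCentralSeries (n - 2) ≠ ⊥) :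
    ∀ k, 1 ≤ k → k ≤ n - 1 → Nat.card ((⊤ : Subgroup G).lowerCentralSeries k) = 5 ^ (n - 1 - k) := by
  have hpow : ∀ k, ∃ e, Nat.card ((⊤ : Subgroup G).lowerCentralSeries k) = 5 ^ e := by
    intro k
    have hdvd : Nat.card ((⊤ : Subgroup G).lowerCentralSeries k) ∣ 5 ^ n := by
      rw [← hord]; exact Subgroup.card_subgroup_dvd_card _
    obtain ⟨e, _, he⟩ := (Nat.dvd_prime_pow (by norm_num)).mp hdvd
    exact ⟨e, he⟩
  have hne : ∀ k, k ≤ n - 2 →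
      (⊤ : Subgroup G).lowerCentralSeries (k + 1) ≠ (⊤ : Subgroup G).lowerCentralSeries k := by
    intro k hk heq
    have h1 : (⊤ : Subgroup G).lowerCentralSeries (n - 1) = (⊤ : Subgroup G).lowerCentralSeries k := by
      have := lcs_stab' k heq (n - 1 - k)
      rwa [show k + (n - 1 - k) = n - 1 by omega] at this
    have h2 : (⊤ : Subgroup G).lowerCentralSeries (n - 2) ≤ (⊤ : Subgroup G).lowerCentralSeries k :=
      Subgroup.lowerCentralSeries_antitone ⊤ (by omega)
    rw [← h1, hmax] at h2
    exact hmax' (le_bot_iff.mp h2)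
  have hstep : ∀ k, k ≤ n - 2 →
      5 * Nat.card ((⊤ : Subgroup G).lowerCentralSeries (k + 1)) ∣ Nat.card ((⊤ : Subgroup G).lowerCentralSeries k) := by
    intro k hk
    obtain ⟨a, ha⟩ := hpow k
    obtain ⟨b, hb⟩ := hpow (k + 1)
    have hdvd : Nat.card ((⊤ : Subgroup G).lowerCentralSeries (k + 1)) ∣ Nat.card ((⊤ : Subgroup G).lowerCentralSeries k) :=
      Subgroup.card_dvd_of_le (Subgroup.lowerCentralSeries_antitone ⊤ (Nat.le_succ k))
    have hba : b ≤ a := by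
      rw [ha, hb] at hdvd
      exact (Nat.pow_dvd_pow_iff_le_right (by norm_num)).mp hdvd
    have hcne : Nat.card ((⊤ : Subgroup G).lowerCentralSeries (k + 1)) ≠ Nat.card ((⊤ : Subgroup G).lowerCentralSeries k) := by
      intro h
      exact hne k hk (Subgroup.eq_of_le_of_card_ge
        (Subgroup.lowerCentralSeries_antitone ⊤ (Nat.le_succ k)) h.ge)
    have hblt : b < a := by
      rcases lt_or_eq_of_le hba with h | h
      · exact h
      · exact absurd (by rw [ha, hb, h]) hcne
    rw [ha, hb]
    calc 5 * 5 ^ b = 5 ^ (b + 1) := by ring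
    _ ∣ 5 ^ a := Nat.pow_dvd_pow 5 (by omega)
  have hA : ∀ j, j ≤ n - 2 → 5 ^ j ∣ Nat.card ((⊤ : Subgroup G).lowerCentralSeries (n - 1 - j)) := by
    intro j
    induction j with
    | zero =>
      intro _
      simp
    | succ j ih =>
      intro hj
      have h1 := hstep (n - 2 - j) (by omega)
      rw [show n - 2 - j + 1 = n - 1 - j by omega] at h1
      have h2 : 5 ^ (j + 1) ∣ 5 * Nat.card ((⊤ : Subgroup G).lowerCentralSeries (n - 1 - j)) := by
        rw [pow_succ, mul_comm (5 ^ j) 5]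
        exact Nat.mul_dvd_mul_left 5 (ih (by omega))
      rw [show n - 1 - (j + 1) = n - 2 - j by omega]
      exact h2.trans h1
  have hB : ∀ k, 1 ≤ k → k ≤ n - 1 →
      5 ^ (k - 1) * Nat.card ((⊤ : Subgroup G).lowerCentralSeries k) ∣ 5 ^ (n - 2) := by
    intro k hk1
    induction k with
    | zero => omega
    | succ k ih =>
      intro hk2
      rcases Nat.eq_or_lt_of_le hk1 with h1 | h1
      · rw [← h1]
        have : 5 ^ (1 - 1) * Nat.card ((⊤ : Subgroup G).lowerCentralSeries 1) = 5 ^ (n - 2) := by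
          rw [hc1]; simp
        exact this.dvd
      · have hk : 1 ≤ k := by omega
        have ihk := ih hk (by omega)
        have h2 := hstep k (by omega)
        have : 5 ^ (k + 1 - 1) * Nat.card ((⊤ : Subgroup G).lowerCentralSeries (k + 1)) =
            5 ^ (k - 1) * (5 * Nat.card ((⊤ : Subgroup G).lowerCentralSeries (k + 1))) := by
          rw [← mul_assoc, ← pow_succ]
          congr 2
          omega
        rw [this]
        exact (Nat.mul_dvd_mul_left _ h2).trans ihk
  intro k hk1 hk2
  have h1 : 5 ^ (n - 1 - k) ∣ Nat.card ((⊤ : Subgroup G).lowerCentralSeries k) := by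
    have := hA (n - 1 - k) (by omega)
    rwa [show n - 1 - (n - 1 - k) = k by omega] at this
  have h2 : Nat.card ((⊤ : Subgroup G).lowerCentralSeries k) ∣ 5 ^ (n - 1 - k) := by
    have hb := hB k hk1 hk2
    rw [show n - 2 = (k - 1) + (n - 1 - k) by omega, pow_add] at hb
    exact (Nat.mul_dvd_mul_iff_left (by positivity : 0 < 5 ^ (k - 1))).mp hb
  exact Nat.dvd_antisymm h2 h1


private lemma lcs2_le_commutator {G : Type*} [Group G] [Finite G] (n : ℕ) (hn : 4 ≤ n)
    (hmax : (⊤ : Subgroup G).lowerCentralSeries (n - 1) = ⊥)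
    (hcard2 : Nat.card ((⊤ : Subgroup G).lowerCentralSeries 2) = 5 ^ (n - 3))
    (hcard3 : Nat.card ((⊤ : Subgroup G).lowerCentralSeries 3) = 5 ^ (n - 4))
    {H : Subgroup G} [hHn : H.Normal] (hg1 : (⊤ : Subgroup G).lowerCentralSeries 1 ≤ H)
    (hub : (⁅H, H⁆ : Subgroup G) ≤ (⊤ : Subgroup G).lowerCentralSeries 2)
    {s u : G} (hs : s ∈ H) (hu : u ∈ (⊤ : Subgroup G).lowerCentralSeries 1)
    (hsu : ⁅s, u⁆ ∉ (⊤ : Subgroup G).lowerCentralSeries 3) :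
    (⊤ : Subgroup G).lowerCentralSeries 2 ≤ ⁅H, H⁆ := by
  set N : Subgroup G := ⁅H, H⁆ with hNdef
  haveI hNnorm : N.Normal := Subgroup.commutator_normal H H
  have hxN : ⁅s, u⁆ ∈ N := Subgroup.commutator_mem_commutator hs (hg1 hu)
  have hbase : N ⊔ (⊤ : Subgroup G).lowerCentralSeries 3 = (⊤ : Subgroup G).lowerCentralSeries 2 := by
    set M := N ⊔ (⊤ : Subgroup G).lowerCentralSeries 3 with hM
    have hMle : M ≤ (⊤ : Subgroup G).lowerCentralSeries 2 :=
      sup_le hub (Subgroup.lowerCentralSeries_antitone ⊤ (by omega))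
    have hle3 : (⊤ : Subgroup G).lowerCentralSeries 3 ≤ M := le_sup_right
    have hMne : M ≠ (⊤ : Subgroup G).lowerCentralSeries 3 := by
      intro h
      have : ⁅s, u⁆ ∈ M := (le_sup_left : N ≤ M) hxN
      rw [h] at this
      exact hsu this
    obtain ⟨e, he⟩ : ∃ e, Nat.card M = 5 ^ e := by
      have hd : Nat.card M ∣ 5 ^ (n - 3) := hcard2 ▸ Subgroup.card_dvd_of_le hMle
      obtain ⟨e, _, h⟩ := (Nat.dvd_prime_pow (by norm_num)).mp hd
      exact ⟨e, h⟩
    have h1 : e ≤ n - 3 := by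
      have hd : (5 : ℕ) ^ e ∣ 5 ^ (n - 3) := he ▸ hcard2 ▸ Subgroup.card_dvd_of_le hMle
      exact (Nat.pow_dvd_pow_iff_le_right (by norm_num)).mp hd
    have h2 : n - 4 ≤ e := by
      have hd : (5 : ℕ) ^ (n - 4) ∣ 5 ^ e := hcard3 ▸ he ▸ Subgroup.card_dvd_of_le hle3
      exact (Nat.pow_dvd_pow_iff_le_right (by norm_num)).mp hd
    have h3 : e ≠ n - 4 := by
      intro h
      exact hMne (Subgroup.eq_of_le_of_card_ge hle3 (by rw [he, hcard3, h])).symm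
    have he2 : e = n - 3 := by omega
    exact Subgroup.eq_of_le_of_card_ge hMle (by rw [he, he2, hcard2])
  have hdesc : ∀ m, N ⊔ (⊤ : Subgroup G).lowerCentralSeries (3 + m) = (⊤ : Subgroup G).lowerCentralSeries 2 := by
    intro m
    induction m with
    | zero => exact hbase
    | succ m ih =>
      set C := N ⊔ (⊤ : Subgroup G).lowerCentralSeries (3 + (m + 1)) with hC
      haveI : C.Normal := Subgroup.sup_normal _ _
      have hkey : (⊤ : Subgroup G).lowerCentralSeries 3 ≤ C := by
        have h32 : (⊤ : Subgroup G).lowerCentralSeries 3 = ⁅(⊤ : Subgroup G).lowerCentralSeries 2, ⊤⁆ := rfl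
        rw [h32, Subgroup.commutator_le]
        intro g hgmem t _
        rw [← ih, ← SetLike.mem_coe, Subgroup.normal_mul] at hgmem
        obtain ⟨h, hh, v, hv, rfl⟩ := hgmem
        have hid : ⁅h * v, t⁆ = (h * ⁅v, t⁆ * h⁻¹) * ⁅h, t⁆ := by
          simp only [commutatorElement_def]; group
        rw [hid]
        apply C.mul_mem
        · have hvt : ⁅v, t⁆ ∈ (⊤ : Subgroup G).lowerCentralSeries (3 + m + 1) :=
            Subgroup.commutator_mem_commutator hv (Subgroup.mem_top t)
          have hconj : h * ⁅v, t⁆ * h⁻¹ ∈ (⊤ : Subgroup G).lowerCentralSeries (3 + m + 1) :=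
            (Subgroup.lowerCentralSeries_normal ⊤ _).conj_mem _ hvt h
          have : h * ⁅v, t⁆ * h⁻¹ ∈ (⊤ : Subgroup G).lowerCentralSeries (3 + (m + 1)) := by
            rwa [show 3 + (m + 1) = 3 + m + 1 by omega]
          exact (le_sup_right : (⊤ : Subgroup G).lowerCentralSeries (3 + (m + 1)) ≤ C) this
        · exact (le_sup_left : N ≤ C)
            (Subgroup.commutator_le_left N ⊤
              (Subgroup.commutator_mem_commutator hh (Subgroup.mem_top t)))
      exact le_antisymm (sup_le hub (Subgroup.lowerCentralSeries_antitone ⊤ (by omega)))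
        (hbase ▸ sup_le le_sup_left hkey)
  have hfin := hdesc (n - 1 - 3)
  rw [show 3 + (n - 1 - 3) = n - 1 by omega, hmax, sup_bot_eq] at hfin
  exact hfin.ge


private lemma commutator_le_lcs2 {G : Type*} [Group G] {H : Subgroup G}
    (hgen : ∃ g ∈ H, ∀ a ∈ H, ∃ m : ℤ, g ^ m * a⁻¹ ∈ (⊤ : Subgroup G).lowerCentralSeries 1) :
    (⁅H, H⁆ : Subgroup G) ≤ (⊤ : Subgroup G).lowerCentralSeries 2 := by
  obtain ⟨g, hg, hgen⟩ := hgen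
  rw [Subgroup.commutator_le]
  intro a ha b hb
  set N := (⊤ : Subgroup G).lowerCentralSeries 2 with hN
  let π := QuotientGroup.mk' N
  have hcent : ∀ u ∈ (⊤ : Subgroup G).lowerCentralSeries 1, π u ∈ Subgroup.center (G ⧸ N) := by
    intro u hu
    rw [Subgroup.mem_center_iff]
    intro q
    obtain ⟨x, rfl⟩ := QuotientGroup.mk'_surjective N q
    have hmem : ⁅u, x⁆ ∈ N :=
      Subgroup.commutator_mem_commutator hu (Subgroup.mem_top x)
    have h1 : π ⁅u, x⁆ = 1 := (QuotientGroup.eq_one_iff _).mpr hmem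
    rw [map_commutatorElement] at h1
    exact (commutatorElement_eq_one_iff_commute.mp h1).symm.eq
  obtain ⟨ma, ha'⟩ := hgen a ha
  obtain ⟨mb, hb'⟩ := hgen b hb
  have hA : π a = (π (g ^ ma * a⁻¹))⁻¹ * (π g) ^ ma := by
    rw [map_mul, map_inv, map_zpow]
    group
  have hB : π b = (π (g ^ mb * b⁻¹))⁻¹ * (π g) ^ mb := by
    rw [map_mul, map_inv, map_zpow]
    group
  have hcomm : Commute (π a) (π b) := by
    rw [hA, hB]
    have c1 : ∀ (v : G ⧸ N), Commute ((π (g ^ ma * a⁻¹))⁻¹) v := fun v =>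
      ((Subgroup.mem_center_iff.mp (Subgroup.center _ |>.inv_mem (hcent _ ha'))) v).symm
    have c2 : ∀ (v : G ⧸ N), Commute v ((π (g ^ mb * b⁻¹))⁻¹) := fun v =>
      (Subgroup.mem_center_iff.mp (Subgroup.center _ |>.inv_mem (hcent _ hb'))) v
    exact Commute.mul_left (c1 _) (Commute.mul_right (c2 _) ((Commute.refl (π g)).zpow_zpow ma mb))
  have : π ⁅a, b⁆ = 1 := by
    rw [map_commutatorElement]
    exact commutatorElement_eq_one_iff_commute.mpr hcomm
  exact (QuotientGroup.eq_one_iff _).mp this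


private lemma abelianization_card_eq {G : Type*} [Group G] [Finite G] (n : ℕ) (hn : 4 ≤ n)
    {H : Subgroup G} (hHcard : Nat.card H = 5 ^ (n - 1))
    (hcomm : (⁅H, H⁆ : Subgroup G) = (⊤ : Subgroup G).lowerCentralSeries 2)
    (hcard2 : Nat.card ((⊤ : Subgroup G).lowerCentralSeries 2) = 5 ^ (n - 3)) :
    Nat.card (Abelianization ↥H) = 5 ^ 2 := by
  have hmap : (commutator ↥H).map H.subtype = ⁅H, H⁆ := by
    rw [commutator_def, Subgroup.map_commutator, ← MonoidHom.range_eq_map,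
      Subgroup.range_subtype]
  have hcardcomm : Nat.card (commutator ↥H) = 5 ^ (n - 3) := by
    have h1 : Nat.card (commutator ↥H) = Nat.card ((commutator ↥H).map H.subtype) :=
      Nat.card_congr (Subgroup.equivMapOfInjective _ _ H.subtype_injective).toEquiv
    rw [h1, hmap, hcomm, hcard2]
  have hindex : Nat.card (Abelianization ↥H) = (commutator ↥H).index :=
    (Subgroup.index_eq_card _).symm
  have hmul := Subgroup.card_mul_index (commutator ↥H)
  rw [hcardcomm, hHcard] at hmul
  rw [hindex]
  have h5 : (5 : ℕ) ^ (n - 1) = 5 ^ (n - 3) * 5 ^ 2 := by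
    rw [← pow_add]
    congr 1
    omega
  rw [h5] at hmul
  exact Nat.eq_of_mul_eq_mul_left (by positivity) hmul

/-- A 5-group of order `5^n` (n ≥ 4) with abelianization of type (5,5) which is of maximal
class admits at least five distinct maximal normal subgroups whose abelianizations have
order `5^2` (Lemma 2.1). -/
theorem five_maximal_normal_subgroups_of_maximal_class {G : Type*} [Group G] [Finite G] (n : ℕ) (hn : 4 ≤ n)
    (hord : Nat.card G = 5 ^ n)
    (habel : Nonempty (Abelianization G ≃* Multiplicative (ZMod 5 × ZMod 5)))
    (hmax : (⊤ : Subgroup G).lowerCentralSeries (n - 1) = ⊥)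
    (hmax' : (⊤ : Subgroup G).lowerCentralSeries (n - 2) ≠ ⊥) :
    ∃ S : Finset (Subgroup G), 5 ≤ S.card ∧
      ∀ H ∈ S, IsCoatom H ∧ H.Normal ∧ Nat.card (Abelianization ↥H) = 5 ^ 2 := by
  classical
  obtain ⟨e⟩ := habel
  haveI hnil : Group.IsNilpotent G := Subgroup.nilpotent_iff_lowerCentralSeries.mpr ⟨n - 1, hmax⟩
  set φ : G →* Multiplicative (ZMod 5 × ZMod 5) := e.toMonoidHom.comp Abelianization.of
    with hphidef
  have hofsurj : Function.Surjective (Abelianization.of (G := G)) := fun y =>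
    QuotientGroup.induction_on y fun g => ⟨g, rfl⟩
  have hφsurj : Function.Surjective φ := e.surjective.comp hofsurj
  have hker : φ.ker = (⊤ : Subgroup G).lowerCentralSeries 1 := by
    rw [Subgroup.top_lowerCentralSeries_one]
    ext x
    constructor
    · intro hx
      have h1 : e (Abelianization.of x) = 1 := hx
      have h2 : Abelianization.of x = 1 := by
        apply e.injective; rw [h1, map_one]
      exact (QuotientGroup.eq_one_iff x).mp h2
    · intro hx
      have h2 : Abelianization.of x = 1 := (QuotientGroup.eq_one_iff x).mpr hx
      show e (Abelianization.of x) = 1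
      rw [h2, map_one]
  set Hs : Fin 6 → Subgroup G := fun k =>
    Subgroup.comap φ (Subgroup.zpowers (Multiplicative.ofAdd (vec6 k))) with hHsdef
  have hKcard : ∀ k : Fin 6, Nat.card (Subgroup.zpowers (Multiplicative.ofAdd (vec6 k))) = 5 :=
    fun k => by rw [Nat.card_zpowers, orderOf_vec6]
  have hKcoatom : ∀ k, IsCoatom (Subgroup.zpowers (Multiplicative.ofAdd (vec6 k))) :=
    fun k => coatom_of_card_five cardW (hKcard k)
  have hcoatom : ∀ k, IsCoatom (Hs k) := fun k =>
    coatom_comap_of_surjective hφsurj (hKcoatom k)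
  have hnormal : ∀ k, (Hs k).Normal := fun k =>
    Subgroup.NormalizerCondition.normal_of_coatom _ normalizerCondition_of_isNilpotent
      (hcoatom k)
  have hmapHs : ∀ k, (Hs k).map φ = Subgroup.zpowers (Multiplicative.ofAdd (vec6 k)) := fun k =>
    Subgroup.map_comap_eq_self_of_surjective hφsurj _
  have hHsinj : Function.Injective Hs := by
    intro i j h
    apply zpowers_vec6_inj
    simp only
    rw [← hmapHs i, ← hmapHs j, h]
  have hg1le : ∀ k, (⊤ : Subgroup G).lowerCentralSeries 1 ≤ Hs k := fun k =>
    hker ▸ Subgroup.ker_le_comap φ _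
  have hKindex : ∀ k : Fin 6, (Subgroup.zpowers (Multiplicative.ofAdd (vec6 k))).index = 5 := by
    intro k
    have h1 := Subgroup.card_mul_index (Subgroup.zpowers (Multiplicative.ofAdd (vec6 k)))
    rw [hKcard k, cardW] at h1
    omega
  have hHsindex : ∀ k, (Hs k).index = 5 := by
    intro k
    rw [hHsdef]
    simp only
    rw [Subgroup.index_comap_of_surjective _ hφsurj, hKindex k]
  have hHscard : ∀ k, Nat.card (Hs k) = 5 ^ (n - 1) := by
    intro k
    have h1 := Subgroup.card_mul_index (Hs k)
    rw [hHsindex k, hord] at h1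
    have h2 : (5 : ℕ) ^ n = 5 ^ (n - 1) * 5 := by
      rw [← pow_succ]; congr 1; omega
    rw [h2] at h1
    exact Nat.eq_of_mul_eq_mul_right (by norm_num) h1
  have hc1 : Nat.card ((⊤ : Subgroup G).lowerCentralSeries 1) = 5 ^ (n - 2) := by
    have hidx : (commutator G).index = 25 := by
      rw [Subgroup.index_eq_card]
      have hq : Nat.card (G ⧸ commutator G) = Nat.card (Multiplicative (ZMod 5 × ZMod 5)) :=
        Nat.card_congr e.toEquiv
      rw [hq, cardW]
    have h1 := Subgroup.card_mul_index (commutator G)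
    rw [hidx, hord] at h1
    have h2 : (5 : ℕ) ^ n = 5 ^ (n - 2) * 25 := by
      rw [show (25 : ℕ) = 5 ^ 2 by norm_num, ← pow_add]; congr 1; omega
    rw [h2] at h1
    rw [Subgroup.top_lowerCentralSeries_one]
    exact Nat.eq_of_mul_eq_mul_right (by norm_num) h1
  have hcard2 : Nat.card ((⊤ : Subgroup G).lowerCentralSeries 2) = 5 ^ (n - 3) := by
    have h := card_lcs n hn hord hc1 hmax hmax' 2 (by omega) (by omega)
    rwa [show n - 1 - 2 = n - 3 by omega] at h
  have hcard3 : Nat.card ((⊤ : Subgroup G).lowerCentralSeries 3) = 5 ^ (n - 4) := by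
    have h := card_lcs n hn hord hc1 hmax hmax' 3 (by omega) (by omega)
    rwa [show n - 1 - 3 = n - 4 by omega] at h
  have hχ : twoStepCentralizer G ≠ ⊤ := by
    intro htop
    have hle : (⊤ : Subgroup G).lowerCentralSeries 2 ≤ (⊤ : Subgroup G).lowerCentralSeries 3 := by
      have h2 : (⊤ : Subgroup G).lowerCentralSeries 2 = ⁅(⊤ : Subgroup G).lowerCentralSeries 1, ⊤⁆ := rfl
      rw [h2, Subgroup.commutator_le]
      intro p hp q _
      have hq : q ∈ twoStepCentralizer G := htop ▸ Subgroup.mem_top q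
      have h3 : ⁅q, p⁆ ∈ (⊤ : Subgroup G).lowerCentralSeries 3 := hq p hp
      have hpq : ⁅p, q⁆ = ⁅q, p⁆⁻¹ := (commutatorElement_inv q p).symm
      rw [hpq]
      exact inv_mem h3
    have heq : (⊤ : Subgroup G).lowerCentralSeries 3 = (⊤ : Subgroup G).lowerCentralSeries 2 :=
      le_antisymm (Subgroup.lowerCentralSeries_antitone ⊤ (by omega)) hle
    have hstab := lcs_stab' 2 heq (n - 1 - 2)
    rw [show 2 + (n - 1 - 2) = n - 1 by omega] at hstab
    have hb : (⊤ : Subgroup G).lowerCentralSeries (n - 2) ≤ (⊤ : Subgroup G).lowerCentralSeries 2 :=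
      Subgroup.lowerCentralSeries_antitone ⊤ (by omega)
    rw [← hstab, hmax] at hb
    exact hmax' (le_bot_iff.mp hb)
  have hgood : ∀ k, ¬ Hs k ≤ twoStepCentralizer G →
      Nat.card (Abelianization ↥(Hs k)) = 5 ^ 2 := by
    intro k hk
    haveI := hnormal k
    have hgen : ∃ g ∈ Hs k, ∀ a ∈ Hs k, ∃ m : ℤ, g ^ m * a⁻¹ ∈ (⊤ : Subgroup G).lowerCentralSeries 1 := by
      obtain ⟨g, hg⟩ := hφsurj (Multiplicative.ofAdd (vec6 k))
      refine ⟨g, ?_, ?_⟩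
      · show φ g ∈ Subgroup.zpowers _
        rw [hg]; exact Subgroup.mem_zpowers _
      · intro a ha
        have hmem : φ a ∈ Subgroup.zpowers (Multiplicative.ofAdd (vec6 k)) := ha
        obtain ⟨m, hm⟩ := hmem
        simp only at hm
        refine ⟨m, ?_⟩
        rw [← hker]
        show φ (g ^ m * a⁻¹) = 1
        rw [map_mul, map_inv, map_zpow, hg, hm]
        simp
    have hub := commutator_le_lcs2 hgen
    have hwit : ∃ s ∈ Hs k, ∃ u ∈ (⊤ : Subgroup G).lowerCentralSeries 1,
        ⁅s, u⁆ ∉ (⊤ : Subgroup G).lowerCentralSeries 3 := by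
      rw [SetLike.not_le_iff_exists] at hk
      obtain ⟨s, hs, hs2⟩ := hk
      refine ⟨s, hs, ?_⟩
      by_contra hcon
      push_neg at hcon
      exact hs2 (fun u hu => hcon u hu)
    obtain ⟨s, hs, u, hu, hsu⟩ := hwit
    have hlb := lcs2_le_commutator n hn hmax hcard2 hcard3 (hg1le k) hub hs hu hsu
    exact abelianization_card_eq n hn (hHscard k) (le_antisymm hub hlb) hcard2
  set T : Finset (Subgroup G) := Finset.image Hs Finset.univ with hT
  have hTcard : T.card = 6 := by
    rw [hT, Finset.card_image_of_injective _ hHsinj, Finset.card_univ, Fintype.card_fin]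
  have hmemT : ∀ H ∈ T, ∃ k, Hs k = H := by
    intro H hH
    rw [hT, Finset.mem_image] at hH
    obtain ⟨k, _, hk⟩ := hH
    exact ⟨k, hk⟩
  have honebad : ∀ H₁ ∈ T, ∀ H₂ ∈ T, H₁ ≠ H₂ → H₁ ≤ twoStepCentralizer G →
      H₂ ≤ twoStepCentralizer G → False := by
    intro H₁ h₁ H₂ h₂ hne hle₁ hle₂
    obtain ⟨k₁, rfl⟩ := hmemT _ h₁
    obtain ⟨k₂, rfl⟩ := hmemT _ h₂
    have hnle : ¬ Hs k₂ ≤ Hs k₁ := by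
      intro h
      rcases lt_or_eq_of_le h with h' | h'
      · exact (hcoatom k₁).1 ((hcoatom k₂).2 _ h')
      · exact hne h'.symm
    have hlt : Hs k₁ < Hs k₁ ⊔ Hs k₂ := left_lt_sup.mpr hnle
    have htop := (hcoatom k₁).2 _ hlt
    have hχle : (⊤ : Subgroup G) ≤ twoStepCentralizer G := htop ▸ sup_le hle₁ hle₂
    exact hχ (top_le_iff.mp hχle)
  by_cases hbad : ∃ H ∈ T, H ≤ twoStepCentralizer G
  · obtain ⟨H₀, hH₀T, hH₀⟩ := hbad
    refine ⟨T.erase H₀, ?_, ?_⟩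
    · rw [Finset.card_erase_of_mem hH₀T, hTcard]
    · intro H hH
      have hHT := Finset.mem_of_mem_erase hH
      have hHne := Finset.ne_of_mem_erase hH
      obtain ⟨k, rfl⟩ := hmemT _ hHT
      have hnle : ¬ Hs k ≤ twoStepCentralizer G := fun hle =>
        honebad _ hHT _ hH₀T hHne hle hH₀
      exact ⟨hcoatom k, hnormal k, hgood k hnle⟩
  · push_neg at hbad
    refine ⟨T, by rw [hTcard]; norm_num, ?_⟩
    intro H hH
    obtain ⟨k, rfl⟩ := hmemT _ hH
    exact ⟨hcoatom k, hnormal k, hgood k (hbad _ hH)⟩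
end
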